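/- Let M be a symmetric irreducible r×r 0–1 transition matrix and let A : Σ̂_M → ℝ be Lipschitz continuous. For each β > 0, let λ_β be the effective constant for the observable βA. Then the limit c_A := lim_{β→∞} λ_β/β exists. -/

import Mathlib

open MeasureTheory Filter Topology Real

/-- The one-sided subshift of finite type defined by the 0-1 transition matrix `M`:
sequences `x : ℕ → Fin r` with `M (x j) (x (j+1)) = 1` for all `j`. -/
abbrev Shift (r : ℕ) (M : Fin r → Fin r → Bool) : Type :=
  {x : ℕ → Fin r // ∀ j : ℕ, M (x j) (x (j + 1)) = true}

variable {r : ℕ} {M : Fin r → Fin r → Bool}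

/-- The matrix `M` is irreducible: any symbol can be joined to any other by an
admissible path of positive length. -/
def Irred (M : Fin r → Fin r → Bool) : Prop :=
  ∀ i j : Fin r, ∃ n : ℕ, ∃ w : Fin (n + 2) → Fin r,
    w 0 = i ∧ w (Fin.last (n + 1)) = j ∧
    ∀ k : Fin (n + 1), M (w k.castSucc) (w k.succ) = true

/-- The left shift map on the subshift. -/
def shiftMap (x : Shift r M) : Shift r M :=
  ⟨fun j => x.1 (j + 1), fun j => x.2 (j + 1)⟩

/-- The metric `d(x,y) = Λ^k`, `k = min { j : x_j ≠ y_j }`, `d(x,x) = 0`. -/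
noncomputable def shiftDist (Λ : ℝ) (x y : Shift r M) : ℝ :=
  letI := Classical.decEq (Shift r M)
  if h : x = y then 0
  else Λ ^ Nat.find (show ∃ j : ℕ, x.1 j ≠ y.1 j by
    by_contra hc
    push_neg at hc
    exact h (Subtype.ext (funext hc)))

/-- `φ` is Lipschitz with constant `K` for the metric `shiftDist Λ`. -/
def LipBnd (Λ K : ℝ) (φ : Shift r M → ℝ) : Prop :=
  ∀ x y : Shift r M, |φ x - φ y| ≤ K * shiftDist Λ x y

/-- `φ` is Lipschitz continuous for the metric `shiftDist Λ`. -/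
def IsLip (Λ : ℝ) (φ : Shift r M → ℝ) : Prop :=
  ∃ K : ℝ, LipBnd Λ K φ

/-- The best Lipschitz constant of `φ`. -/
noncomputable def lipC (Λ : ℝ) (φ : Shift r M → ℝ) : ℝ :=
  sInf {K : ℝ | 0 ≤ K ∧ LipBnd Λ K φ}

/-- The uniform norm `‖φ‖₀`. -/
noncomputable def unorm (φ : Shift r M → ℝ) : ℝ :=
  ⨆ x : Shift r M, |φ x|

/-- An observable on the natural extension `Σ̂_M ⊂ Σ*_M × Σ_M` (with `Σ*_M`
canonically identified with `Σ_M`), as a function of `(y, x)`; it is Lipschitz with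
constant `K` for the max-metric. -/
def LipBnd2 (Λ K : ℝ) (A : Shift r M → Shift r M → ℝ) : Prop :=
  ∀ y x y' x' : Shift r M,
    |A y x - A y' x'| ≤ K * max (shiftDist Λ y y') (shiftDist Λ x x')

/-- `A` is Lipschitz continuous on `Σ̂_M`. -/
def IsLip2 (Λ : ℝ) (A : Shift r M → Shift r M → ℝ) : Prop :=
  ∃ K : ℝ, LipBnd2 Λ K A

/-- The best Lipschitz constant of the observable `A`. -/
noncomputable def lipC2 (Λ : ℝ) (A : Shift r M → Shift r M → ℝ) : ℝ :=
  sInf {K : ℝ | 0 ≤ K ∧ LipBnd2 Λ K A}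

/-- The uniform norm `‖A‖₀` of the observable. -/
noncomputable def unorm2 (A : Shift r M → Shift r M → ℝ) : ℝ :=
  ⨆ p : Shift r M × Shift r M, |A p.1 p.2|

/-- `μ` is a `σ`-invariant Borel probability measure on the subshift. -/
def InvProb (μ : Measure (Shift r M)) : Prop :=
  IsProbabilityMeasure μ ∧ μ.map shiftMap = μ

/-- Entropy of the cylinder partition of length `n`:
`H_n(μ) = - ∑_{|w| = n} μ([w]) log μ([w])`. -/
noncomputable def cylEnt (μ : Measure (Shift r M)) (n : ℕ) : ℝ :=
  ∑ w : Fin n → Fin r,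
    Real.negMulLog ((μ {x : Shift r M | ∀ i : Fin n, x.1 i.1 = w i}).toReal)

/-- The Kolmogorov–Sinai entropy `h_μ(σ)` of an invariant measure on the subshift:
since the cylinder partition is generating and `n ↦ H_n(μ)` is subadditive,
`h_μ(σ) = lim_n H_n(μ)/n = inf_n H_n(μ)/n`. -/
noncomputable def entropy (μ : Measure (Shift r M)) : ℝ :=
  ⨅ n : ℕ, cylEnt μ (n + 1) / (n + 1)

/-- The operator
`G⁺_A(φ)(y) = sup_{μ ∈ M_σ} [ ∫ (A(y,x) + φ(x)) dμ(x) + h_μ(σ) ]`. -/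
noncomputable def Gplus (A : Shift r M → Shift r M → ℝ)
    (φ : Shift r M → ℝ) (y : Shift r M) : ℝ :=
  sSup {t : ℝ | ∃ μ : Measure (Shift r M), InvProb μ ∧
    t = ∫ x, (A y x + φ x) ∂μ + entropy μ}

/-- The maximal ergodic average `max_{μ ∈ M_σ} ∫ B dμ`. -/
noncomputable def maxErg (B : Shift r M → ℝ) : ℝ :=
  sSup {t : ℝ | ∃ μ : Measure (Shift r M), InvProb μ ∧ t = ∫ x, B x ∂μ}

/-- The quotient norm on functions modulo additive constants:
`‖g‖_c = inf_{γ ∈ ℝ} ‖g + γ‖₀`. -/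
noncomputable def cnorm (g : Shift r M → ℝ) : ℝ :=
  ⨅ γ : ℝ, unorm (fun x => g x + γ)

section Aux
variable {r : ℕ} {M : Fin r → Fin r → Bool} {Λ : ℝ}

lemma shiftDist_nonneg (hΛ : 0 < Λ) (x y : Shift r M) : 0 ≤ shiftDist Λ x y := by
  unfold shiftDist
  split
  · exact le_refl 0
  · positivity

lemma shiftDist_le_one (hΛ0 : 0 < Λ) (hΛ1 : Λ < 1) (x y : Shift r M) :
    shiftDist Λ x y ≤ 1 := by
  unfold shiftDist
  split
  · norm_num
  · exact pow_le_one₀ hΛ0.le hΛ1.le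

lemma shiftDist_self (x : Shift r M) : shiftDist Λ x x = 0 := by
  unfold shiftDist
  simp

lemma shiftDist_le_pow (hΛ0 : 0 < Λ) (hΛ1 : Λ < 1) {x y : Shift r M} {k : ℕ}
    (h : ∀ j, j < k → x.1 j = y.1 j) : shiftDist Λ x y ≤ Λ ^ k := by
  unfold shiftDist
  split
  · positivity
  · apply pow_le_pow_of_le_one hΛ0.le hΛ1.le
    rw [Nat.le_find_iff]
    intro m hm hne
    exact hne (h m hm)

end Aux

section Aux2
variable {r : ℕ} {M : Fin r → Fin r → Bool} {Λ : ℝ}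

lemma cyl_measurable (k : ℕ) (w : Fin k → Fin r) :
    MeasurableSet {y : Shift r M | ∀ i : Fin k, y.1 i.1 = w i} := by
  have he : {y : Shift r M | ∀ i : Fin k, y.1 i.1 = w i} =
      ⋂ i : Fin k, (fun y : Shift r M => y.1 i.1) ⁻¹' {w i} := by
    ext y; simp [Set.mem_iInter]
  rw [he]
  exact MeasurableSet.iInter fun i =>
    ((measurable_pi_apply (i : ℕ)).comp measurable_subtype_coe)
      (measurableSet_singleton (w i))

lemma measurable_of_lipBnd (hΛ0 : 0 < Λ) (hΛ1 : Λ < 1) {K : ℝ} {φ : Shift r M → ℝ}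
    (hK : 0 ≤ K) (h : LipBnd Λ K φ) : Measurable φ := by
  apply measurable_of_Iio
  intro a
  have key : φ ⁻¹' Set.Iio a = ⋃ k : ℕ, ⋃ w : Fin k → Fin r,
      ⋃ (_ : ∃ x : Shift r M, (∀ i : Fin k, x.1 i.1 = w i) ∧ φ x + K * Λ ^ k < a),
      {y : Shift r M | ∀ i : Fin k, y.1 i.1 = w i} := by
    ext x
    simp only [Set.mem_preimage, Set.mem_Iio, Set.mem_iUnion, Set.mem_setOf_eq]
    constructor
    · intro hx
      have htend : Filter.Tendsto (fun k : ℕ => K * Λ ^ k) Filter.atTop (𝓝 0) := by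
        have := tendsto_pow_atTop_nhds_zero_of_lt_one hΛ0.le hΛ1
        simpa using this.const_mul K
      have : ∀ᶠ k : ℕ in Filter.atTop, K * Λ ^ k < a - φ x :=
        htend.eventually_lt_const (by linarith)
      obtain ⟨k, hk⟩ := this.exists
      exact ⟨k, fun i => x.1 i.1, ⟨x, fun _ => rfl, by linarith⟩, fun _ => rfl⟩
    · rintro ⟨k, w, ⟨x', hx', hlt⟩, hxw⟩
      have hd : shiftDist Λ x' x ≤ Λ ^ k := by
        apply shiftDist_le_pow hΛ0 hΛ1
        intro j hj
        rw [hx' ⟨j, hj⟩, hxw ⟨j, hj⟩]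
      have := h x x'
      have : φ x - φ x' ≤ K * Λ ^ k := by
        calc φ x - φ x' ≤ |φ x - φ x'| := le_abs_self _
        _ = |φ x' - φ x| := abs_sub_comm _ _
        _ ≤ K * shiftDist Λ x' x := h x' x
        _ ≤ K * Λ ^ k := mul_le_mul_of_nonneg_left hd hK
      linarith
  rw [key]
  exact MeasurableSet.iUnion fun k => MeasurableSet.iUnion fun w =>
    MeasurableSet.iUnion fun _ => cyl_measurable k w

lemma lipBnd_of_nonneg {K : ℝ} {φ : Shift r M → ℝ} (hΛ0 : 0 < Λ)
    (h : LipBnd Λ K φ) : LipBnd Λ (max K 0) φ := fun x y =>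
  le_trans (h x y) (mul_le_mul_of_nonneg_right (le_max_left _ _) (shiftDist_nonneg hΛ0 x y))

lemma measurable_of_isLip (hΛ0 : 0 < Λ) (hΛ1 : Λ < 1) {φ : Shift r M → ℝ}
    (h : IsLip Λ φ) : Measurable φ := by
  obtain ⟨K, hK⟩ := h
  exact measurable_of_lipBnd hΛ0 hΛ1 (le_max_right K 0) (lipBnd_of_nonneg hΛ0 hK)

lemma measurable_shiftMap : Measurable (shiftMap : Shift r M → Shift r M) := by
  apply Measurable.subtype_mk
  rw [measurable_pi_iff]
  intro j
  exact (measurable_pi_apply (j + 1)).comp measurable_subtype_coe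

lemma exists_edge (hr : 2 ≤ r) (hIrr : Irred M) : ∃ a b : Fin r, M a b = true := by
  have h0 : (0 : ℕ) < r := by omega
  obtain ⟨n, w, h0', hlast, hstep⟩ := hIrr ⟨0, h0⟩ ⟨0, h0⟩
  exact ⟨w (0 : Fin (n + 1)).castSucc, w (0 : Fin (n + 1)).succ, hstep 0⟩

lemma exists_point (hr : 2 ≤ r) (hSym : ∀ i j, M i j = M j i) (hIrr : Irred M) :
    ∃ z : Shift r M, shiftMap (shiftMap z) = z := by
  obtain ⟨a, b, hab⟩ := exists_edge hr hIrr
  refine ⟨⟨fun j => if Even j then a else b, ?_⟩, ?_⟩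
  · intro j
    by_cases hj : Even j
    · simp [hj, Nat.even_add_one, hab]
    · simpa [hj, Nat.even_add_one] using (hSym a b ▸ hab)
  · apply Subtype.ext
    funext j
    show (if Even (j + 1 + 1) then a else b) = (if Even j then a else b)
    have : Even (j + 1 + 1) ↔ Even j := by
      simp [Nat.even_add_one, Classical.not_not]
    simp only [this]

lemma exists_invProb (hr : 2 ≤ r) (hSym : ∀ i j, M i j = M j i) (hIrr : Irred M) :
    ∃ μ : Measure (Shift r M), InvProb μ := by
  obtain ⟨z, hz⟩ := exists_point hr hSym hIrr
  refine ⟨(2 : ENNReal)⁻¹ • (Measure.dirac z + Measure.dirac (shiftMap z)), ?_, ?_⟩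
  · constructor
    simp only [Measure.smul_apply, Measure.add_apply, measure_univ, smul_eq_mul]
    rw [one_add_one_eq_two, ENNReal.inv_mul_cancel (by norm_num) (by norm_num)]
  · rw [Measure.map_smul, Measure.map_add _ _ measurable_shiftMap,
      Measure.map_dirac' measurable_shiftMap, Measure.map_dirac' measurable_shiftMap, hz,
      add_comm]

end Aux2

section Aux3
variable {r : ℕ} {M : Fin r → Fin r → Bool} {Λ : ℝ}

lemma negMulLog_le_one' {p : ℝ} (h0 : 0 ≤ p) (h1 : p ≤ 1) : Real.negMulLog p ≤ 1 := by
  rcases eq_or_lt_of_le h0 with h | h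
  · simp [← h, Real.negMulLog]
  · have hlog : Real.log p⁻¹ ≤ p⁻¹ - 1 := Real.log_le_sub_one_of_pos (by positivity)
    rw [Real.log_inv] at hlog
    have : p * (-Real.log p) ≤ p * (p⁻¹ - 1) := mul_le_mul_of_nonneg_left hlog h0
    rw [mul_sub, mul_inv_cancel₀ (ne_of_gt h)] at this
    have : p * (-Real.log p) ≤ 1 - p := by linarith
    calc Real.negMulLog p = p * (-Real.log p) := by rw [Real.negMulLog]; ring
    _ ≤ 1 - p := this
    _ ≤ 1 := by linarith

lemma toReal_prob_le_one {μ : Measure (Shift r M)} [IsProbabilityMeasure μ]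
    (s : Set (Shift r M)) : (μ s).toReal ≤ 1 := by
  have := ENNReal.toReal_mono ENNReal.one_ne_top (prob_le_one (μ := μ) (s := s))
  simpa using this

lemma cylEnt_nonneg {μ : Measure (Shift r M)} [IsProbabilityMeasure μ] (n : ℕ) :
    0 ≤ cylEnt μ n :=
  Finset.sum_nonneg fun w _ =>
    Real.negMulLog_nonneg ENNReal.toReal_nonneg (toReal_prob_le_one _)

lemma entropy_nonneg {μ : Measure (Shift r M)} [IsProbabilityMeasure μ] :
    0 ≤ entropy μ :=
  Real.iInf_nonneg fun n => div_nonneg (cylEnt_nonneg _) (by positivity)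

lemma entropy_le_r {μ : Measure (Shift r M)} [IsProbabilityMeasure μ] :
    entropy μ ≤ r := by
  have hb : BddBelow (Set.range fun n : ℕ => cylEnt μ (n + 1) / (n + 1)) := by
    refine ⟨0, ?_⟩
    rintro t ⟨n, rfl⟩
    exact div_nonneg (cylEnt_nonneg _) (by positivity)
  have h1 : entropy μ ≤ cylEnt μ 1 / 1 := by
    have := ciInf_le hb 0
    rw [entropy]
    exact this.trans_eq (by norm_num)
  have h2 : cylEnt μ 1 ≤ (r : ℝ) := by
    calc cylEnt μ 1 ≤ ∑ _w : Fin 1 → Fin r, (1 : ℝ) :=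
          Finset.sum_le_sum fun w _ =>
            negMulLog_le_one' ENNReal.toReal_nonneg (toReal_prob_le_one _)
    _ = (Fintype.card (Fin 1 → Fin r) : ℝ) := by simp
    _ = r := by simp
  simpa using h1.trans (by simpa using h2)

lemma abs_integral_le_of_bound {μ : Measure (Shift r M)} [IsProbabilityMeasure μ]
    {f : Shift r M → ℝ} {C : ℝ} (hC : ∀ x, |f x| ≤ C) : |∫ x, f x ∂μ| ≤ C := by
  have := norm_integral_le_of_norm_le_const (μ := μ) (f := f) (C := C)
    (ae_of_all _ fun x => by simpa [Real.norm_eq_abs] using hC x)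
  simpa [Real.norm_eq_abs, measure_univ] using this

lemma integrable_of_bound {μ : Measure (Shift r M)} [IsProbabilityMeasure μ]
    {f : Shift r M → ℝ} {C : ℝ} (hf : Measurable f) (hC : ∀ x, |f x| ≤ C) :
    Integrable f μ :=
  Integrable.mono' (integrable_const C) hf.aestronglyMeasurable
    (ae_of_all _ fun x => by simpa [Real.norm_eq_abs] using hC x)

lemma bound_of_lipBnd (hΛ0 : 0 < Λ) (hΛ1 : Λ < 1) (z : Shift r M) {K : ℝ}
    {φ : Shift r M → ℝ} (h : LipBnd Λ K φ) (x : Shift r M) :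
    |φ x| ≤ |φ z| + max K 0 := by
  have h1 : |φ x - φ z| ≤ max K 0 * shiftDist Λ x z := lipBnd_of_nonneg hΛ0 h x z
  have h2 : max K 0 * shiftDist Λ x z ≤ max K 0 * 1 :=
    mul_le_mul_of_nonneg_left (shiftDist_le_one hΛ0 hΛ1 x z) (le_max_right _ _)
  calc |φ x| = |(φ x - φ z) + φ z| := by ring_nf
  _ ≤ |φ x - φ z| + |φ z| := abs_add_le _ _
  _ ≤ |φ z| + max K 0 := by linarith

lemma lipBnd_slice (hΛ0 : 0 < Λ) {K : ℝ} {A : Shift r M → Shift r M → ℝ}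
    (hK : 0 ≤ K) (h : LipBnd2 Λ K A) (y : Shift r M) :
    LipBnd Λ K (fun x => A y x) := by
  intro x x'
  have := h y x y x'
  rwa [shiftDist_self, max_eq_right (shiftDist_nonneg hΛ0 x x')] at this

end Aux3

set_option maxHeartbeats 1000000 in
/-- With `λ_β` the effective constant for the observable `βA`,
the limit `c_A = lim_{β → ∞} λ_β/β` exists. -/
theorem effective_constant_limit_exists
    (r : ℕ) (hr : 2 ≤ r) (M : Fin r → Fin r → Bool)
    (hSym : ∀ i j, M i j = M j i) (hIrr : Irred M)
    (Λ : ℝ) (hΛ : Λ ∈ Set.Ioo (0 : ℝ) 1)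
    (A : Shift r M → Shift r M → ℝ) (hA : IsLip2 Λ A)
    (φ : ℝ → Shift r M → ℝ) (lam : ℝ → ℝ)
    (heff : ∀ β > (0 : ℝ), IsLip Λ (φ β) ∧
      ∀ y, Gplus (fun y x => β * A y x) (φ β) y = φ β y + lam β) :
    ∃ c : ℝ, Filter.Tendsto (fun β => lam β / β) Filter.atTop (𝓝 c) := by
  obtain ⟨hΛ0, hΛ1⟩ := hΛ
  obtain ⟨μ0, hμ0⟩ := exists_invProb hr hSym hIrr
  obtain ⟨z, hz2⟩ := exists_point hr hSym hIrr
  haveI hne : Nonempty (Shift r M) := ⟨z⟩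
  obtain ⟨K0, hK0⟩ := hA
  set KA := max K0 0 with hKAdef
  have hKA0 : 0 ≤ KA := le_max_right _ _
  have hA2 : LipBnd2 Λ KA A := fun y x y' x' =>
    (hK0 y x y' x').trans (mul_le_mul_of_nonneg_right (le_max_left _ _)
      (le_max_of_le_left (shiftDist_nonneg hΛ0 _ _)))
  have hAy : ∀ y, LipBnd Λ KA (fun x => A y x) := lipBnd_slice hΛ0 hKA0 hA2
  have hAymeas : ∀ y, Measurable (fun x : Shift r M => A y x) := fun y =>
    measurable_of_lipBnd hΛ0 hΛ1 hKA0 (hAy y)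
  set CA := |A z z| + KA with hCAdef
  have hCA : ∀ y x, |A y x| ≤ CA := by
    intro y x
    have h1 := hA2 y x z z
    have hm : max (shiftDist Λ y z) (shiftDist Λ x z) ≤ 1 :=
      max_le (shiftDist_le_one hΛ0 hΛ1 _ _) (shiftDist_le_one hΛ0 hΛ1 _ _)
    have hm0 : 0 ≤ max (shiftDist Λ y z) (shiftDist Λ x z) :=
      le_max_of_le_left (shiftDist_nonneg hΛ0 _ _)
    have h2 : |A y x - A z z| ≤ KA := by nlinarith
    calc |A y x| = |(A y x - A z z) + A z z| := by ring_nf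
    _ ≤ |A y x - A z z| + |A z z| := abs_add_le _ _
    _ ≤ CA := by rw [hCAdef]; linarith
  have hCA0 : 0 ≤ CA := le_trans (abs_nonneg _) (hCA z z)
  have hφmeas : ∀ β, 0 < β → Measurable (φ β) := fun β hβ =>
    measurable_of_isLip hΛ0 hΛ1 (heff β hβ).1
  have hφbdd : ∀ β, 0 < β → ∃ C, ∀ x, |φ β x| ≤ C := by
    intro β hβ
    obtain ⟨K, hK⟩ := (heff β hβ).1
    exact ⟨|φ β z| + max K 0, bound_of_lipBnd hΛ0 hΛ1 z hK⟩
  -- the sets in Gplus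
  set S : ℝ → (Shift r M → ℝ) → Shift r M → Set ℝ :=
    fun β ψ y => {t : ℝ | ∃ μ : Measure (Shift r M), InvProb μ ∧
      t = ∫ x, (β * A y x + ψ x) ∂μ + entropy μ} with hSdef
  have hGS : ∀ (β : ℝ) ψ y, Gplus (fun y x => β * A y x) ψ y = sSup (S β ψ y) :=
    fun _ _ _ => rfl
  have hSne : ∀ (β : ℝ) ψ y, (S β ψ y).Nonempty := fun β ψ y => ⟨_, μ0, hμ0, rfl⟩
  have hSbddAbove : ∀ (β : ℝ) (ψ : Shift r M → ℝ) (Cψ : ℝ), (∀ x, |ψ x| ≤ Cψ) →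
      ∀ y, BddAbove (S β ψ y) := by
    intro β ψ Cψ hCψ y
    refine ⟨|β| * CA + Cψ + r, ?_⟩
    rintro t ⟨μ, hμ, rfl⟩
    haveI := hμ.1
    have hint : |∫ x, (β * A y x + ψ x) ∂μ| ≤ |β| * CA + Cψ :=
      abs_integral_le_of_bound fun x => by
        calc |β * A y x + ψ x| ≤ |β * A y x| + |ψ x| := abs_add_le _ _
        _ ≤ |β| * CA + Cψ := by
            rw [abs_mul]
            exact add_le_add
              (mul_le_mul_of_nonneg_left (hCA y x) (abs_nonneg β)) (hCψ x)
    have hent : entropy μ ≤ (r : ℝ) := entropy_le_r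
    have := (abs_le.mp hint).2
    linarith
  -- integrability helper
  have hintg : ∀ (β : ℝ) (ψ : Shift r M → ℝ) (Cψ : ℝ), (∀ x, |ψ x| ≤ Cψ) →
      Measurable ψ → ∀ (μ : Measure (Shift r M)), IsProbabilityMeasure μ → ∀ y,
      Integrable (fun x => β * A y x + ψ x) μ := by
    intro β ψ Cψ hCψ hψm μ hμ y
    exact integrable_of_bound (((hAymeas y).const_mul β).add hψm)
      (fun x => (abs_add_le _ _).trans (by
        rw [abs_mul]
        exact add_le_add
          (mul_le_mul_of_nonneg_left (hCA y x) (abs_nonneg β)) (hCψ x)))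
  -- oscillation bound for φ β
  have hosc : ∀ β, 0 < β → ∀ y y', φ β y - φ β y' ≤ β * KA := by
    intro β hβ y y'
    obtain ⟨Cψ, hCψ⟩ := hφbdd β hβ
    have hmeas := hφmeas β hβ
    have heq := (heff β hβ).2
    have hle : sSup (S β (φ β) y) ≤ sSup (S β (φ β) y') + β * KA := by
      apply csSup_le (hSne _ _ _)
      rintro t ⟨μ, hμ, rfl⟩
      haveI := hμ.1
      have hf := hintg β (φ β) Cψ hCψ hmeas μ hμ.1 y
      have hf' := hintg β (φ β) Cψ hCψ hmeas μ hμ.1 y'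
      have hdiff : ∫ x, (β * A y x + φ β x) ∂μ
          - ∫ x, (β * A y' x + φ β x) ∂μ ≤ β * KA := by
        rw [← integral_sub hf hf']
        have hpt : ∀ x, (β * A y x + φ β x) - (β * A y' x + φ β x) ≤ β * KA := by
          intro x
          have h2 := hA2 y x y' x
          rw [shiftDist_self, max_eq_left (shiftDist_nonneg hΛ0 y y')] at h2
          have h3 : A y x - A y' x ≤ KA := by
            have hd1 : shiftDist Λ y y' ≤ 1 := shiftDist_le_one hΛ0 hΛ1 _ _
            have hd0 : 0 ≤ shiftDist Λ y y' := shiftDist_nonneg hΛ0 _ _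
            nlinarith [le_trans (le_abs_self _) h2]
          nlinarith [hβ.le]
        calc ∫ x, ((β * A y x + φ β x) - (β * A y' x + φ β x)) ∂μ
            ≤ ∫ _x, β * KA ∂μ := integral_mono (hf.sub hf') (integrable_const _) hpt
        _ = β * KA := by simp [measure_univ]
      have hmem : ∫ x, (β * A y' x + φ β x) ∂μ + entropy μ ∈ S β (φ β) y' :=
        ⟨μ, hμ, rfl⟩
      have := le_csSup (hSbddAbove β (φ β) Cψ hCψ y') hmem
      linarith
    rw [← hGS, ← hGS, heq y, heq y'] at hle
    linarith
  -- key inequality from the fixed-point equation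
  have hkey : ∀ β, 0 < β → ∀ (μ : Measure (Shift r M)), InvProb μ → ∀ y,
      ∫ x, (β * A y x + φ β x) ∂μ + entropy μ ≤ φ β y + lam β := by
    intro β hβ μ hμ y
    obtain ⟨Cψ, hCψ⟩ := hφbdd β hβ
    have := le_csSup (hSbddAbove β (φ β) Cψ hCψ y)
      (show _ ∈ S β (φ β) y from ⟨μ, hμ, rfl⟩)
    rwa [← hGS, (heff β hβ).2 y] at this
  -- upper bound on lam
  have hub : ∀ β, 0 < β → lam β ≤ β * (CA + KA) + r := by
    intro β hβ
    obtain ⟨Cψ, hCψ⟩ := hφbdd β hβ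
    have hmeas := hφmeas β hβ
    have hy : sSup (S β (φ β) z) ≤ φ β z + (β * (CA + KA) + r) := by
      apply csSup_le (hSne _ _ _)
      rintro t ⟨μ, hμ, rfl⟩
      haveI := hμ.1
      have hf := hintg β (φ β) Cψ hCψ hmeas μ hμ.1 z
      have hpt : ∀ x, β * A z x + φ β x ≤ β * CA + (φ β z + β * KA) := by
        intro x
        have h1 : A z x ≤ CA := (le_abs_self _).trans (hCA z x)
        have h2 : φ β x - φ β z ≤ β * KA := hosc β hβ x z
        nlinarith [hβ.le]
      have hint : ∫ x, (β * A z x + φ β x) ∂μ ≤ β * CA + (φ β z + β * KA) := by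
        calc ∫ x, (β * A z x + φ β x) ∂μ
            ≤ ∫ _x, (β * CA + (φ β z + β * KA)) ∂μ :=
              integral_mono hf (integrable_const _) hpt
        _ = β * CA + (φ β z + β * KA) := by simp [measure_univ]
      have hent : entropy μ ≤ (r : ℝ) := entropy_le_r
      linarith
    rw [← hGS, (heff β hβ).2 z] at hy
    linarith
  -- lower bound on lam
  have hlb : ∀ β, 0 < β → -(β * (CA + KA)) ≤ lam β := by
    intro β hβ
    obtain ⟨Cψ, hCψ⟩ := hφbdd β hβ
    have hmeas := hφmeas β hβ
    haveI := hμ0.1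
    have hf := hintg β (φ β) Cψ hCψ hmeas μ0 hμ0.1 z
    have hpt : ∀ x, -(β * CA) + (φ β z - β * KA) ≤ β * A z x + φ β x := by
      intro x
      have h1 : -CA ≤ A z x := (abs_le.mp (hCA z x)).1
      have h2 : φ β z - φ β x ≤ β * KA := hosc β hβ z x
      nlinarith [hβ.le]
    have hint : -(β * CA) + (φ β z - β * KA) ≤ ∫ x, (β * A z x + φ β x) ∂μ0 := by
      calc -(β * CA) + (φ β z - β * KA)
          = ∫ _x, (-(β * CA) + (φ β z - β * KA)) ∂μ0 := by simp [measure_univ]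
      _ ≤ _ := integral_mono (integrable_const _) hf hpt
    have hent : (0 : ℝ) ≤ entropy μ0 := entropy_nonneg
    have := hkey β hβ μ0 hμ0 z
    linarith
  -- convexity of lam on (0, ∞)
  have hconv : ConvexOn ℝ (Set.Ioi (0 : ℝ)) lam := by
    refine ⟨convex_Ioi 0, ?_⟩
    intro β1 hβ1 β2 hβ2 a b ha hb hab
    rw [Set.mem_Ioi] at hβ1 hβ2
    set β := a * β1 + b * β2 with hβdef
    have hβ : 0 < β := by
      have h1 : a * min β1 β2 ≤ a * β1 := mul_le_mul_of_nonneg_left (min_le_left _ _) ha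
      have h2 : b * min β1 β2 ≤ b * β2 := mul_le_mul_of_nonneg_left (min_le_right _ _) hb
      have h3 : (a + b) * min β1 β2 = min β1 β2 := by rw [hab, one_mul]
      have h4 : 0 < min β1 β2 := lt_min hβ1 hβ2
      nlinarith
    obtain ⟨C1, hC1⟩ := hφbdd β1 hβ1
    obtain ⟨C2, hC2⟩ := hφbdd β2 hβ2
    obtain ⟨Cb, hCb⟩ := hφbdd β hβ
    set ψ : Shift r M → ℝ := fun x => a * φ β1 x + b * φ β2 x with hψdef
    have hψm : Measurable ψ :=
      ((hφmeas β1 hβ1).const_mul a).add ((hφmeas β2 hβ2).const_mul b)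
    have hψb : ∀ x, |ψ x| ≤ |a| * C1 + |b| * C2 := fun x =>
      (abs_add_le _ _).trans (by
        rw [abs_mul, abs_mul]
        exact add_le_add (mul_le_mul_of_nonneg_left (hC1 x) (abs_nonneg a))
          (mul_le_mul_of_nonneg_left (hC2 x) (abs_nonneg b)))
    have hbddr : BddAbove (Set.range fun x => φ β x - ψ x) := by
      refine ⟨Cb + (|a| * C1 + |b| * C2), ?_⟩
      rintro t ⟨x, rfl⟩
      have h1 := (abs_le.mp (hCb x)).2
      have h2 := (abs_le.mp (hψb x)).1
      simp only
      linarith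
    set s := ⨆ x, (φ β x - ψ x) with hsdef
    have hs : ∀ x, φ β x - ψ x ≤ s := fun x => le_ciSup hbddr x
    have hmain : ∀ y, φ β y + lam β ≤ ψ y + s + (a * lam β1 + b * lam β2) := by
      intro y
      rw [← (heff β hβ).2 y, hGS]
      apply csSup_le (hSne _ _ _)
      rintro t ⟨μ, hμ, rfl⟩
      haveI := hμ.1
      have hfb := hintg β (φ β) Cb hCb (hφmeas β hβ) μ hμ.1 y
      have hfψ := hintg β ψ (|a| * C1 + |b| * C2) hψb hψm μ hμ.1 y
      have hf1 := hintg β1 (φ β1) C1 hC1 (hφmeas β1 hβ1) μ hμ.1 y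
      have hf2 := hintg β2 (φ β2) C2 hC2 (hφmeas β2 hβ2) μ hμ.1 y
      have step1 : ∫ x, (β * A y x + φ β x) ∂μ ≤ ∫ x, (β * A y x + ψ x) ∂μ + s := by
        have hpt : ∀ x, β * A y x + φ β x ≤ (β * A y x + ψ x) + s := by
          intro x; have := hs x; linarith
        calc ∫ x, (β * A y x + φ β x) ∂μ
            ≤ ∫ x, ((β * A y x + ψ x) + s) ∂μ :=
              integral_mono hfb (hfψ.add (integrable_const _)) hpt
        _ = ∫ x, (β * A y x + ψ x) ∂μ + s := by
            rw [integral_add hfψ (integrable_const _)]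
            simp [measure_univ]
      have step2 : ∫ x, (β * A y x + ψ x) ∂μ
          = a * ∫ x, (β1 * A y x + φ β1 x) ∂μ + b * ∫ x, (β2 * A y x + φ β2 x) ∂μ := by
        rw [← integral_const_mul, ← integral_const_mul,
          ← integral_add (hf1.const_mul a) (hf2.const_mul b)]
        congr 1
        funext x
        simp only [hψdef, hβdef]
        ring
      have k1 := mul_le_mul_of_nonneg_left (hkey β1 hβ1 μ hμ y) ha
      have k2 := mul_le_mul_of_nonneg_left (hkey β2 hβ2 μ hμ y) hb
      have hh : a * entropy μ + b * entropy μ = entropy μ := by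
        calc a * entropy μ + b * entropy μ = (a + b) * entropy μ := by ring
        _ = entropy μ := by rw [hab, one_mul]
      have k1' : a * ∫ x, (β1 * A y x + φ β1 x) ∂μ + a * entropy μ
          ≤ a * φ β1 y + a * lam β1 := by rw [mul_add, mul_add] at k1; exact k1
      have k2' : b * ∫ x, (β2 * A y x + φ β2 x) ∂μ + b * entropy μ
          ≤ b * φ β2 y + b * lam β2 := by rw [mul_add, mul_add] at k2; exact k2
      have hψy : ψ y = a * φ β1 y + b * φ β2 y := rfl
      rw [hψy]
      linarith [step1, step2, k1', k2', hh]
    have hfinal : ∀ x, φ β x - ψ x ≤ s + (a * lam β1 + b * lam β2) - lam β := by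
      intro x; have := hmain x; linarith
    have hss : s ≤ s + (a * lam β1 + b * lam β2) - lam β := by
      rw [hsdef]; exact ciSup_le hfinal
    have : lam β ≤ a * lam β1 + b * lam β2 := by linarith
    simpa [hβdef, smul_eq_mul] using this
  -- slopes
  set C := CA + KA with hCdef
  have hC0 : 0 ≤ C := add_nonneg hCA0 hKA0
  set g : ℝ → ℝ := fun β => (lam β - lam 1) / (β - 1) with hgdef
  set G : ℝ → ℝ := fun β => g (max β 2) with hGdef
  have hmono : ∀ u v : ℝ, 2 ≤ u → u ≤ v → g u ≤ g v := by
    intro u v hu huv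
    exact hconv.secant_mono (Set.mem_Ioi.mpr one_pos)
      (Set.mem_Ioi.mpr (by linarith)) (Set.mem_Ioi.mpr (by linarith))
      (by intro h; rw [h] at hu; linarith) (by intro h; rw [h] at huv; linarith) huv
  have hGmono : Monotone G := fun u v huv =>
    hmono _ _ (le_max_right _ _) (max_le_max huv le_rfl)
  have hGbdd : BddAbove (Set.range G) := by
    refine ⟨2 * C + r + |lam 1|, ?_⟩
    rintro t ⟨β, rfl⟩
    show g (max β 2) ≤ _
    set m := max β 2 with hmdef
    have hm : 2 ≤ m := le_max_right _ _
    have h1 : lam m ≤ m * C + r := hub m (by linarith)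
    have h2 : -|lam 1| ≤ lam 1 := neg_abs_le _
    rw [hgdef]
    simp only
    rw [div_le_iff₀ (by linarith : (0 : ℝ) < m - 1)]
    have hr0 : (0 : ℝ) ≤ r := Nat.cast_nonneg r
    nlinarith [mul_nonneg (by linarith : (0:ℝ) ≤ m - 2) hC0,
      mul_nonneg (by linarith : (0:ℝ) ≤ m - 2) (add_nonneg hr0 (abs_nonneg (lam 1)))]
  have hGtend : Filter.Tendsto G Filter.atTop (𝓝 (⨆ β, G β)) :=
    tendsto_atTop_ciSup hGmono hGbdd
  have hgeq : G =ᶠ[Filter.atTop] g := by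
    filter_upwards [Filter.eventually_ge_atTop (2 : ℝ)] with β hβ
    rw [hGdef]
    simp only
    rw [max_eq_left hβ]
  have hgtend : Filter.Tendsto g Filter.atTop (𝓝 (⨆ β, G β)) := hGtend.congr' hgeq
  have h2 : Filter.Tendsto (fun β : ℝ => (β - 1) / β) Filter.atTop (𝓝 1) := by
    have heq : (fun β : ℝ => 1 - β⁻¹) =ᶠ[Filter.atTop] fun β : ℝ => (β - 1) / β := by
      filter_upwards [Filter.eventually_ne_atTop (0 : ℝ)] with β hβ
      field_simp
    have ht : Filter.Tendsto (fun β : ℝ => 1 - β⁻¹) Filter.atTop (𝓝 (1 - 0)) :=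
      tendsto_const_nhds.sub tendsto_inv_atTop_zero
    simpa using ht.congr' heq
  have h3 : Filter.Tendsto (fun β : ℝ => lam 1 * β⁻¹) Filter.atTop (𝓝 (lam 1 * 0)) :=
    tendsto_inv_atTop_zero.const_mul _
  have hcomb := (hgtend.mul h2).add h3
  refine ⟨(⨆ β, G β) * 1 + lam 1 * 0, hcomb.congr' ?_⟩
  filter_upwards [Filter.eventually_ge_atTop (2 : ℝ)] with β hβ
  have hβ0 : β ≠ 0 := by intro h; rw [h] at hβ; norm_num at hβ
  have hβ1 : β - 1 ≠ 0 := by intro h; nlinarith [hβ]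
  rw [hgdef]
  simp only
  field_simp
  ring
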